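/- The velocity projected IDM admits, on a sufficiently small time horizon T* > 0, a unique solution (x, v) ∈ W^{1,∞}((0,T*))². -/

import Mathlib

open MeasureTheory Set

set_option maxHeartbeats 1000000

/-- The IDM acceleration function. -/
noncomputable def IDMAcc (a b vfree τ s₀ l δ : ℝ) (x v xl vl : ℝ) : ℝ :=
  a * (1 - (|v| / vfree) ^ δ -
    ((2 * Real.sqrt (a * b) * (s₀ + v * τ) + v * (v - vl)) /
      (2 * Real.sqrt (a * b) * (xl - x - l))) ^ 2)

/-- A solution of the **velocity projected IDM** on `[0, T]`:
`ẋ = max{v, 0}`, `v̇ = Acc(x, max{v,0}, x_l, v_l)`. -/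
structure VPIDMSolution (a b vfree τ s₀ l δ T : ℝ) (ulead : ℝ → ℝ)
    (x₀ xl₀ v₀ vl₀ : ℝ) (x xl v vl : ℝ → ℝ) : Prop where
  init_x : x 0 = x₀
  init_xl : xl 0 = xl₀
  init_v : v 0 = v₀
  init_vl : vl 0 = vl₀
  gap_pos : ∀ t ∈ Icc (0:ℝ) T, 0 < xl t - x t - l
  deriv_x : ∀ t ∈ Icc (0:ℝ) T, HasDerivAt x (max (v t) 0) t
  deriv_xl : ∀ t ∈ Icc (0:ℝ) T, HasDerivAt xl (vl t) t
  eq_vl : ∀ t ∈ Icc (0:ℝ) T, vl t = vl₀ + ∫ s in (0:ℝ)..t, ulead s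
  deriv_v : ∀ t ∈ Icc (0:ℝ) T,
    HasDerivAt v (IDMAcc a b vfree τ s₀ l δ (x t) (max (v t) 0) (xl t) (vl t)) t


lemma nnnorm_le_toNNReal {y C : ℝ} (hC : 0 ≤ C) (h : |y| ≤ C) : ‖y‖₊ ≤ Real.toNNReal C := by
  rw [← NNReal.coe_le_coe, coe_nnnorm, Real.norm_eq_abs, Real.coe_toNNReal _ hC]
  exact h

section Slice

variable {a b vfree τ s₀ l δ ε M A : ℝ}
  (ha : 0 < a) (hb : 0 < b) (hvf : 0 < vfree) (hτ : 0 < τ) (hs₀ : 0 < s₀)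
  (hδ : 1 < δ) (hε : 0 < ε) (hM : 0 ≤ M) (hA : 0 ≤ A)

include ha hb hτ hs₀ hM hA in
lemma Nbound {w V : ℝ} (hw : w ∈ Icc 0 M) (hV : |V| ≤ A) :
    |2 * Real.sqrt (a * b) * (s₀ + w * τ) + w * (w - V)| ≤
      2 * Real.sqrt (a * b) * (s₀ + M * τ) + M * (M + A) := by
  obtain ⟨hw0, hwM⟩ := hw
  have hc : 0 < 2 * Real.sqrt (a * b) := by positivity
  obtain ⟨hV1, hV2⟩ := abs_le.1 hV
  rw [abs_le]
  have e1 : 0 ≤ 2 * Real.sqrt (a * b) * (s₀ + w * τ) :=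
    mul_nonneg hc.le (by nlinarith)
  have e2 : 2 * Real.sqrt (a * b) * (s₀ + w * τ) ≤ 2 * Real.sqrt (a * b) * (s₀ + M * τ) := by
    apply mul_le_mul_of_nonneg_left _ hc.le
    nlinarith
  have e3 : w * V ≤ w * A := mul_le_mul_of_nonneg_left hV2 hw0
  have e4 : w * A ≤ M * A := mul_le_mul_of_nonneg_right hwM hA
  have e5 : w * (-V) ≤ w * A := mul_le_mul_of_nonneg_left (by linarith) hw0
  have e6 : w * w ≤ M * M := mul_self_le_mul_self hw0 hwM
  constructor <;> nlinarith [mul_nonneg hw0 hw0]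

include ha hb hvf hτ hs₀ hδ hε hM hA in
lemma sliceX {w V X : ℝ} (hw : w ∈ Icc 0 M) (hV : |V| ≤ A) :
    LipschitzOnWith
      (Real.toNNReal (2 * a * (2 * Real.sqrt (a * b) * (s₀ + M * τ) + M * (M + A)) ^ 2 *
        (2 * Real.sqrt (a * b)) / (2 * Real.sqrt (a * b) * ε) ^ 3))
      (fun x => IDMAcc a b vfree τ s₀ l δ x w X V) (Iic (X - l - ε)) := by
  set c := 2 * Real.sqrt (a * b) with hcdef
  have hc : 0 < c := by rw [hcdef]; positivity
  set N := c * (s₀ + w * τ) + w * (w - V) with hN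
  set NB := c * (s₀ + M * τ) + M * (M + A) with hNB
  have hNle : |N| ≤ NB := Nbound ha hb hτ hs₀ hM hA hw hV
  have hNB0 : 0 ≤ NB := le_trans (abs_nonneg N) hNle
  apply Convex.lipschitzOnWith_of_nnnorm_hasDerivWithin_le (convex_Iic _)
    (f' := fun x => a * -(2 * (N / (c * (X - x - l))) ^ 1 *
      ((0 * (c * (X - x - l)) - N * (c * -1)) / (c * (X - x - l)) ^ 2)))
  · intro x hx
    have hgap : ε ≤ X - x - l := by simp only [mem_Iic] at hx; linarith
    have hgap0 : (0:ℝ) < X - x - l := lt_of_lt_of_le hε hgap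
    have hune : c * (X - x - l) ≠ 0 := ne_of_gt (mul_pos hc hgap0)
    have hu : HasDerivAt (fun x => c * (X - x - l)) (c * -1) x := by
      have h1 : HasDerivAt (fun x : ℝ => X - x - l) (-1) x := by
        simpa using ((hasDerivAt_id x).const_sub X).sub_const l
      simpa using h1.const_mul c
    have hq : HasDerivAt (fun x => (N / (c * (X - x - l))) ^ 2)
        (2 * (N / (c * (X - x - l))) ^ 1 *
          ((0 * (c * (X - x - l)) - N * (c * -1)) / (c * (X - x - l)) ^ 2)) x := by
      have := ((hasDerivAt_const x N).div hu hune).pow 2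
      exact this.congr_deriv (by simp)
    have hf : HasDerivAt (fun x => IDMAcc a b vfree τ s₀ l δ x w X V)
        (a * -(2 * (N / (c * (X - x - l))) ^ 1 *
          ((0 * (c * (X - x - l)) - N * (c * -1)) / (c * (X - x - l)) ^ 2))) x := by
      have h2 := (hq.const_sub (1 - (|w| / vfree) ^ δ)).const_mul a
      simpa [IDMAcc, hN, sub_sub] using h2
    exact hf.hasDerivWithinAt
  · intro x hx
    have hgap : ε ≤ X - x - l := by simp only [mem_Iic] at hx; linarith
    have hgap0 : (0:ℝ) < X - x - l := lt_of_lt_of_le hε hgap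
    set u := c * (X - x - l) with hu
    have hu0 : 0 < u := by positivity
    apply nnnorm_le_toNNReal (div_nonneg
      (mul_nonneg (mul_nonneg (by linarith) (sq_nonneg NB)) hc.le)
      (pow_nonneg (mul_nonneg hc.le hε.le) 3))
    have heq : a * -(2 * (N / u) ^ 1 * ((0 * u - N * (c * -1)) / u ^ 2)) =
        -(2 * a * N ^ 2 * c / u ^ 3) := by
      field_simp
      ring
    rw [heq, abs_neg, abs_of_nonneg (by positivity)]
    have hcu : c * ε ≤ u := by
      rw [hu]
      exact mul_le_mul_of_nonneg_left hgap hc.le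
    have hN2 : N ^ 2 ≤ NB ^ 2 := by
      rw [← sq_abs N]
      exact pow_le_pow_left₀ (abs_nonneg N) hNle 2
    gcongr
end Slice

section SliceV
variable {a b vfree τ s₀ l δ ε M A : ℝ}
  (ha : 0 < a) (hb : 0 < b) (hvf : 0 < vfree) (hτ : 0 < τ) (hs₀ : 0 < s₀)
  (hδ : 1 < δ) (hε : 0 < ε) (hM : 0 ≤ M) (hA : 0 ≤ A)

include ha hb hvf hτ hs₀ hδ hε hM hA in
lemma sliceV {x V X : ℝ} (hx : x ∈ Iic (X - l - ε)) (hV : |V| ≤ A) :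
    LipschitzOnWith
      (Real.toNNReal (a * (δ * (M / vfree) ^ (δ - 1) * (1 / vfree) +
        2 * ((2 * Real.sqrt (a * b) * (s₀ + M * τ) + M * (M + A)) / (2 * Real.sqrt (a * b) * ε)) *
          ((2 * Real.sqrt (a * b) * τ + 2 * M + A) / (2 * Real.sqrt (a * b) * ε)))))
      (fun w => IDMAcc a b vfree τ s₀ l δ x w X V) (Icc 0 M) := by
  set c := 2 * Real.sqrt (a * b) with hcdef
  have hc : 0 < c := by rw [hcdef]; positivity
  have hgap : ε ≤ X - x - l := by simp only [mem_Iic] at hx; linarith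
  have hgap0 : (0:ℝ) < X - x - l := lt_of_lt_of_le hε hgap
  set u := c * (X - x - l) with hudef
  have hu0 : 0 < u := mul_pos hc hgap0
  have hcε : 0 < c * ε := mul_pos hc hε
  have hcu : c * ε ≤ u := mul_le_mul_of_nonneg_left hgap hc.le
  set NB := c * (s₀ + M * τ) + M * (M + A) with hNBdef
  have hNB0 : 0 ≤ NB := by
    have : 0 ≤ c * (s₀ + M * τ) := mul_nonneg hc.le (by nlinarith)
    nlinarith
  apply Convex.lipschitzOnWith_of_nnnorm_hasDerivWithin_le (convex_Icc 0 M)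
    (f' := fun w => a * (-(δ * (w / vfree) ^ (δ - 1) * (1 / vfree)) -
      2 * ((c * (s₀ + w * τ) + w * (w - V)) / u) ^ 1 * ((c * τ + (2 * w - V)) / u)))
  · intro w hw
    have hr : HasDerivAt (fun w : ℝ => (w / vfree) ^ δ)
        (δ * (w / vfree) ^ (δ - 1) * (1 / vfree)) w := by
      have h0 : HasDerivAt (fun y : ℝ => y ^ δ) (δ * (w / vfree) ^ (δ - 1)) (w / vfree) :=
        Real.hasDerivAt_rpow_const (Or.inr hδ.le)
      have h1 : HasDerivAt (fun w : ℝ => w / vfree) (1 / vfree) w := by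
        simpa using (hasDerivAt_id w).div_const vfree
      simpa [Function.comp_def] using h0.comp w h1
    have hN : HasDerivAt (fun w => c * (s₀ + w * τ) + w * (w - V)) (c * τ + (2 * w - V)) w := by
      have h2 := (((hasDerivAt_const w s₀).add ((hasDerivAt_id w).mul_const τ)).const_mul c).add
        ((hasDerivAt_id w).mul ((hasDerivAt_id w).sub_const V))
      exact h2.congr_deriv (by simp only [id_eq, zero_add, one_mul, mul_one]; ring)
    have hq : HasDerivAt (fun w => ((c * (s₀ + w * τ) + w * (w - V)) / u) ^ 2)
        (2 * ((c * (s₀ + w * τ) + w * (w - V)) / u) ^ 1 * ((c * τ + (2 * w - V)) / u)) w := by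
      have := (hN.div_const u).pow 2
      exact this.congr_deriv (by simp)
    have hg : HasDerivAt
        (fun w => a * (1 - (w / vfree) ^ δ - ((c * (s₀ + w * τ) + w * (w - V)) / u) ^ 2))
        (a * (-(δ * (w / vfree) ^ (δ - 1) * (1 / vfree)) -
          2 * ((c * (s₀ + w * τ) + w * (w - V)) / u) ^ 1 * ((c * τ + (2 * w - V)) / u))) w := by
      exact ((hr.const_sub 1).sub hq).const_mul a
    apply (hg.hasDerivWithinAt).congr
    · intro y hy
      simp only [IDMAcc, abs_of_nonneg hy.1, ← hcdef, ← hudef]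
    · simp only [IDMAcc, abs_of_nonneg hw.1, ← hcdef, ← hudef]
  · intro w hw
    obtain ⟨hw0, hwM⟩ := hw
    obtain ⟨hV1, hV2⟩ := abs_le.1 hV
    set T1 := δ * (w / vfree) ^ (δ - 1) * (1 / vfree) with hT1
    set T2 := 2 * ((c * (s₀ + w * τ) + w * (w - V)) / u) ^ 1 * ((c * τ + (2 * w - V)) / u)
      with hT2
    set B1 := δ * (M / vfree) ^ (δ - 1) * (1 / vfree) with hB1
    set B2 := 2 * (NB / (c * ε)) * ((c * τ + 2 * M + A) / (c * ε)) with hB2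
    have hT1nonneg : 0 ≤ T1 := by
      rw [hT1]
      have : (0:ℝ) ≤ (w / vfree) ^ (δ - 1) := Real.rpow_nonneg (by positivity) _
      positivity
    have hT1le : T1 ≤ B1 := by
      rw [hT1, hB1]
      have h7 : (w / vfree) ^ (δ - 1) ≤ (M / vfree) ^ (δ - 1) :=
        Real.rpow_le_rpow (by positivity) (by gcongr) (by linarith)
      apply mul_le_mul_of_nonneg_right (mul_le_mul_of_nonneg_left h7 (by linarith))
        (by positivity)
    have hNle : |c * (s₀ + w * τ) + w * (w - V)| ≤ NB := by
      rw [hNBdef, hcdef]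
      exact Nbound ha hb hτ hs₀ hM hA ⟨hw0, hwM⟩ hV
    have hT2le : |T2| ≤ B2 := by
      rw [hT2, hB2, pow_one]
      rw [abs_mul, abs_mul, abs_two, abs_div, abs_div, abs_of_pos hu0]
      have h4 : |c * (s₀ + w * τ) + w * (w - V)| / u ≤ NB / (c * ε) :=
        div_le_div₀ hNB0 hNle hcε hcu
      have hcτ : 0 < c * τ := mul_pos hc hτ
      have h5 : |c * τ + (2 * w - V)| ≤ c * τ + 2 * M + A := by
        rw [abs_le]
        constructor <;> linarith
      have h6 : |c * τ + (2 * w - V)| / u ≤ (c * τ + 2 * M + A) / (c * ε) :=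
        div_le_div₀ (by linarith) h5 hcε hcu
      apply mul_le_mul _ h6 (by positivity) (by positivity)
      exact mul_le_mul_of_nonneg_left h4 (by norm_num)
    have hB1nonneg : 0 ≤ B1 := le_trans hT1nonneg hT1le
    have hB2nonneg : 0 ≤ B2 := le_trans (abs_nonneg _) hT2le
    apply nnnorm_le_toNNReal (by positivity)
    calc |a * (-T1 - T2)| = a * |(-T1) + (-T2)| := by
          rw [abs_mul, abs_of_pos ha, sub_eq_add_neg]
      _ ≤ a * (|(-T1)| + |(-T2)|) := by
          apply mul_le_mul_of_nonneg_left (abs_add_le _ _) ha.le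
      _ = a * (|T1| + |T2|) := by rw [abs_neg, abs_neg]
      _ ≤ a * (B1 + B2) := by
          apply mul_le_mul_of_nonneg_left _ ha.le
          exact add_le_add (by rw [abs_of_nonneg hT1nonneg]; exact hT1le) hT2le
end SliceV

section Field
variable {a b vfree τ s₀ l δ ε M A : ℝ}
  (ha : 0 < a) (hb : 0 < b) (hvf : 0 < vfree) (hτ : 0 < τ) (hs₀ : 0 < s₀)
  (hδ : 1 < δ) (hε : 0 < ε) (hM : 0 ≤ M) (hA : 0 ≤ A)

lemma lipschitzWith_max_zero : LipschitzWith 1 (fun x : ℝ => max x 0) :=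
  LipschitzWith.of_dist_le_mul fun x y => by
    simp only [Real.dist_eq, NNReal.coe_one, one_mul]
    exact abs_max_sub_max_le_abs x y 0

lemma lipschitzOnWith_prod_set {f : ℝ × ℝ → ℝ} {I J : Set ℝ} {K₁ K₂ : NNReal}
    (h1 : ∀ w ∈ J, LipschitzOnWith K₁ (fun x => f (x, w)) I)
    (h2 : ∀ x ∈ I, LipschitzOnWith K₂ (fun w => f (x, w)) J) :
    LipschitzOnWith (K₁ + K₂) f (I ×ˢ J) := by
  rw [lipschitzOnWith_iff_dist_le_mul]
  rintro ⟨p1, p2⟩ ⟨hp1, hp2⟩ ⟨q1, q2⟩ ⟨hq1, hq2⟩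
  have d1 := (lipschitzOnWith_iff_dist_le_mul.1 (h1 p2 hp2)) p1 hp1 q1 hq1
  have d2 := (lipschitzOnWith_iff_dist_le_mul.1 (h2 q1 hq1)) p2 hp2 q2 hq2
  have hfst : dist p1 q1 ≤ dist (p1, p2) (q1, q2) := by
    rw [Prod.dist_eq]; exact le_max_left _ _
  have hsnd : dist p2 q2 ≤ dist (p1, p2) (q1, q2) := by
    rw [Prod.dist_eq]; exact le_max_right _ _
  calc dist (f (p1, p2)) (f (q1, q2))
      ≤ dist (f (p1, p2)) (f (q1, p2)) + dist (f (q1, p2)) (f (q1, q2)) := dist_triangle _ _ _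
    _ ≤ K₁ * dist p1 q1 + K₂ * dist p2 q2 := add_le_add d1 d2
    _ ≤ K₁ * dist (p1, p2) (q1, q2) + K₂ * dist (p1, p2) (q1, q2) := by gcongr
    _ = (K₁ + K₂ : NNReal) * dist (p1, p2) (q1, q2) := by push_cast; ring

include ha hb hvf hτ hs₀ hδ hε hM hA in
lemma field_lipschitz : ∃ K : NNReal, ∀ X V : ℝ, |V| ≤ A →
    LipschitzOnWith K
      (fun p : ℝ × ℝ => (max p.2 0, IDMAcc a b vfree τ s₀ l δ p.1 (max p.2 0) X V))
      (Iic (X - l - ε) ×ˢ Icc (-M) M) := by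
  set K1 := Real.toNNReal (2 * a * (2 * Real.sqrt (a * b) * (s₀ + M * τ) + M * (M + A)) ^ 2 *
        (2 * Real.sqrt (a * b)) / (2 * Real.sqrt (a * b) * ε) ^ 3) with hK1
  set K2 := Real.toNNReal (a * (δ * (M / vfree) ^ (δ - 1) * (1 / vfree) +
        2 * ((2 * Real.sqrt (a * b) * (s₀ + M * τ) + M * (M + A)) / (2 * Real.sqrt (a * b) * ε)) *
          ((2 * Real.sqrt (a * b) * τ + 2 * M + A) / (2 * Real.sqrt (a * b) * ε)))) with hK2
  refine ⟨max 1 ((K1 + K2) * 1), fun X V hV => ?_⟩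
  have hG : LipschitzOnWith (K1 + K2)
      (fun q : ℝ × ℝ => IDMAcc a b vfree τ s₀ l δ q.1 q.2 X V)
      (Iic (X - l - ε) ×ˢ Icc 0 M) :=
    lipschitzOnWith_prod_set
      (fun w hw => sliceX ha hb hvf hτ hs₀ hδ hε hM hA hw hV)
      (fun x hx => sliceV ha hb hvf hτ hs₀ hδ hε hM hA hx hV)
  have hm : LipschitzWith 1 (fun p : ℝ × ℝ => (p.1, max p.2 0)) := by
    have := (LipschitzWith.prod_fst (α := ℝ) (β := ℝ)).prodMk
      (lipschitzWith_max_zero.comp (LipschitzWith.prod_snd (α := ℝ) (β := ℝ)))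
    simpa [Function.comp_def] using this
  have hmaps : MapsTo (fun p : ℝ × ℝ => (p.1, max p.2 0))
      (Iic (X - l - ε) ×ˢ Icc (-M) M) (Iic (X - l - ε) ×ˢ Icc 0 M) := by
    rintro ⟨p1, p2⟩ ⟨h1, h2⟩
    exact ⟨h1, le_max_right _ _, max_le h2.2 hM⟩
  have hcomp := hG.comp hm.lipschitzOnWith hmaps
  have hfst : LipschitzOnWith 1 (fun p : ℝ × ℝ => max p.2 0)
      (Iic (X - l - ε) ×ˢ Icc (-M) M) := by
    have := lipschitzWith_max_zero.comp (LipschitzWith.prod_snd (α := ℝ) (β := ℝ))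
    simpa [Function.comp_def] using this.lipschitzOnWith
  exact hfst.prodMk hcomp

include ha hb hvf hτ hs₀ hδ hε hM hA in
lemma acc_bound {X V x w : ℝ} (hV : |V| ≤ A) (hx : x ≤ X - l - ε) (hw0 : 0 ≤ w) (hwM : w ≤ M) :
    |IDMAcc a b vfree τ s₀ l δ x w X V| ≤
      a * (1 + (M / vfree) ^ δ +
        ((2 * Real.sqrt (a * b) * (s₀ + M * τ) + M * (M + A)) /
          (2 * Real.sqrt (a * b) * ε)) ^ 2) := by
  set c := 2 * Real.sqrt (a * b) with hcdef
  have hc : 0 < c := by rw [hcdef]; positivity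
  have hgap : ε ≤ X - x - l := by linarith
  have hgap0 : (0:ℝ) < X - x - l := lt_of_lt_of_le hε hgap
  have hu0 : 0 < c * (X - x - l) := mul_pos hc hgap0
  have hcε : 0 < c * ε := mul_pos hc hε
  have hcu : c * ε ≤ c * (X - x - l) := mul_le_mul_of_nonneg_left hgap hc.le
  set NB := c * (s₀ + M * τ) + M * (M + A) with hNBdef
  have hNle : |c * (s₀ + w * τ) + w * (w - V)| ≤ NB := by
    rw [hNBdef, hcdef]
    exact Nbound ha hb hτ hs₀ hM hA ⟨hw0, hwM⟩ hV
  have hNB0 : 0 ≤ NB := le_trans (abs_nonneg _) hNle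
  have hr0 : (0:ℝ) ≤ (w / vfree) ^ δ := Real.rpow_nonneg (by positivity) _
  have hrM : (w / vfree) ^ δ ≤ (M / vfree) ^ δ :=
    Real.rpow_le_rpow (by positivity) (by gcongr) (by linarith)
  have hq2 : ((c * (s₀ + w * τ) + w * (w - V)) / (c * (X - x - l))) ^ 2 ≤ (NB / (c * ε)) ^ 2 := by
    rw [← sq_abs ((c * (s₀ + w * τ) + w * (w - V)) / (c * (X - x - l)))]
    apply pow_le_pow_left₀ (abs_nonneg _) _ 2
    rw [abs_div, abs_of_pos hu0]
    exact div_le_div₀ hNB0 hNle hcε hcu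
  have hq0 : (0:ℝ) ≤ ((c * (s₀ + w * τ) + w * (w - V)) / (c * (X - x - l))) ^ 2 := sq_nonneg _
  simp only [IDMAcc, abs_of_nonneg hw0, ← hcdef]
  rw [abs_mul, abs_of_pos ha]
  apply mul_le_mul_of_nonneg_left _ ha.le
  rw [abs_le]
  constructor <;> nlinarith
end Field

section Uniq

lemma hasDerivAt_pair {f g : ℝ → ℝ} {f' g' : ℝ → ℝ} {t : ℝ}
    (hf : HasDerivAt f (f' t) t) (hg : HasDerivAt g (g' t) t) :
    HasDerivAt (fun s => (f s, g s)) (f' t, g' t) t := hf.prodMk hg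

lemma vpidm_unique {a b vfree τ s₀ l δ Tf A : ℝ} {ulead : ℝ → ℝ} {x₀ xl₀ v₀ vl₀ : ℝ}
    (ha : 0 < a) (hb : 0 < b) (hvf : 0 < vfree) (hτ : 0 < τ) (hs₀ : 0 < s₀) (hδ : 1 < δ)
    (hTf : 0 < Tf) (hA0 : 0 ≤ A)
    {x xl v vl x' xl' v' vl' : ℝ → ℝ}
    (S : VPIDMSolution a b vfree τ s₀ l δ Tf ulead x₀ xl₀ v₀ vl₀ x xl v vl)
    (S' : VPIDMSolution a b vfree τ s₀ l δ Tf ulead x₀ xl₀ v₀ vl₀ x' xl' v' vl')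
    (hvlA : ∀ t ∈ Icc (0:ℝ) Tf, |vl t| ≤ A) :
    ∀ t ∈ Icc (0:ℝ) Tf, x' t = x t ∧ xl' t = xl t ∧ v' t = v t ∧ vl' t = vl t := by
  -- the leader's velocity agrees
  have hvl : ∀ t ∈ Icc (0:ℝ) Tf, vl' t = vl t := fun t ht => by
    rw [S'.eq_vl t ht, S.eq_vl t ht]
  -- the leader's position agrees
  have hxlc : ContinuousOn xl (Icc 0 Tf) :=
    fun t ht => (S.deriv_xl t ht).continuousAt.continuousWithinAt
  have hxl'c : ContinuousOn xl' (Icc 0 Tf) :=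
    fun t ht => (S'.deriv_xl t ht).continuousAt.continuousWithinAt
  have hxleq : EqOn xl xl' (Icc 0 Tf) := by
    apply ODE_solution_unique (v := fun t (_ : ℝ) => vl t) (K := 0)
      (fun t => LipschitzWith.const' (vl t)) hxlc
      (fun t ht => (S.deriv_xl t (Ico_subset_Icc_self ht)).hasDerivWithinAt) hxl'c
    · intro t ht
      have hI := Ico_subset_Icc_self ht
      have h := S'.deriv_xl t hI
      rw [hvl t hI] at h
      exact h.hasDerivWithinAt
    · rw [S.init_xl, S'.init_xl]
  -- continuity of the followers
  have hxc : ContinuousOn x (Icc 0 Tf) :=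
    fun t ht => (S.deriv_x t ht).continuousAt.continuousWithinAt
  have hx'c : ContinuousOn x' (Icc 0 Tf) :=
    fun t ht => (S'.deriv_x t ht).continuousAt.continuousWithinAt
  have hvc : ContinuousOn v (Icc 0 Tf) :=
    fun t ht => (S.deriv_v t ht).continuousAt.continuousWithinAt
  have hv'c : ContinuousOn v' (Icc 0 Tf) :=
    fun t ht => (S'.deriv_v t ht).continuousAt.continuousWithinAt
  -- positive lower bound on both gaps
  obtain ⟨tm, htm, hmin⟩ := isCompact_Icc.exists_isMinOn (f := fun t => xl t - x t - l)
    (nonempty_Icc.2 hTf.le) ((hxlc.sub hxc).sub continuousOn_const)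
  obtain ⟨tm', htm', hmin'⟩ := isCompact_Icc.exists_isMinOn (f := fun t => xl t - x' t - l)
    (nonempty_Icc.2 hTf.le) ((hxlc.sub hx'c).sub continuousOn_const)
  set εu := min (xl tm - x tm - l) (xl tm' - x' tm' - l) with hεu
  have hεu0 : 0 < εu := by
    apply lt_min (S.gap_pos tm htm)
    have := S'.gap_pos tm' htm'
    rwa [← hxleq htm'] at this
  -- bound on the velocities
  obtain ⟨Mv, hMv⟩ := isCompact_Icc.exists_bound_of_continuousOn hvc
  obtain ⟨Mv', hMv'⟩ := isCompact_Icc.exists_bound_of_continuousOn hv'c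
  set M' := max 0 (max Mv Mv') with hM'
  have hM'0 : 0 ≤ M' := le_max_left _ _
  obtain ⟨K, hK⟩ := field_lipschitz (l := l) ha hb hvf hτ hs₀ hδ hεu0 hM'0 hA0
  -- uniqueness via Gronwall
  set s : ℝ → Set (ℝ × ℝ) := fun t =>
    if t ∈ Icc (0:ℝ) Tf then Iic (xl t - l - εu) ×ˢ Icc (-M') M' else ∅ with hs
  have hEq : EqOn (fun t => (x' t, v' t)) (fun t => (x t, v t)) (Icc 0 Tf) := by
    apply ODE_solution_unique_of_mem_Icc_right (K := K) (s := s)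
      (v := fun t p => (max p.2 0, IDMAcc a b vfree τ s₀ l δ p.1 (max p.2 0) (xl t) (vl t)))
    · intro t _
      by_cases ht : t ∈ Icc (0:ℝ) Tf
      · rw [hs]; simp only [if_pos ht]
        exact hK (xl t) (vl t) (hvlA t ht)
      · rw [hs]; simp only [if_neg ht]
        exact lipschitzOnWith_empty _ _
    · exact hx'c.prodMk hv'c
    · intro t ht
      have hI := Ico_subset_Icc_self ht
      have h1 := (S'.deriv_x t hI).prodMk (S'.deriv_v t hI)
      rw [← hxleq hI, hvl t hI] at h1
      exact h1.hasDerivWithinAt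
    · intro t ht
      have hI := Ico_subset_Icc_self ht
      have hst : s t = Iic (xl t - l - εu) ×ˢ Icc (-M') M' := if_pos hI
      rw [hst]
      refine Set.mem_prod.2 ⟨mem_Iic.2 ?_, mem_Icc.2 ⟨?_, ?_⟩⟩
      · have h2 : xl t - x' t - l ≥ xl tm' - x' tm' - l := by
          have := hmin' hI; simpa using this
        have : εu ≤ xl tm' - x' tm' - l := min_le_right _ _
        linarith
      · have := abs_le.1 ((hMv' t hI).trans ((le_max_right Mv Mv').trans (le_max_right 0 _)))
        exact this.1
      · have := abs_le.1 ((hMv' t hI).trans ((le_max_right Mv Mv').trans (le_max_right 0 _)))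
        exact this.2
    · exact hxc.prodMk hvc
    · intro t ht
      have hI := Ico_subset_Icc_self ht
      exact ((S.deriv_x t hI).prodMk (S.deriv_v t hI)).hasDerivWithinAt
    · intro t ht
      have hI := Ico_subset_Icc_self ht
      have hst : s t = Iic (xl t - l - εu) ×ˢ Icc (-M') M' := if_pos hI
      rw [hst]
      refine Set.mem_prod.2 ⟨mem_Iic.2 ?_, mem_Icc.2 ⟨?_, ?_⟩⟩
      · have h2 : xl t - x t - l ≥ xl tm - x tm - l := by
          have := hmin hI; simpa using this
        have : εu ≤ xl tm - x tm - l := min_le_left _ _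
        linarith
      · have := abs_le.1 ((hMv t hI).trans ((le_max_left Mv Mv').trans (le_max_right 0 _)))
        exact this.1
      · have := abs_le.1 ((hMv t hI).trans ((le_max_left Mv Mv').trans (le_max_right 0 _)))
        exact this.2
    · simp only [S.init_x, S'.init_x, S.init_v, S'.init_v]
  intro t ht
  have h3 := hEq ht
  simp only [Prod.mk.injEq] at h3
  exact ⟨h3.1, (hxleq ht).symm, h3.2, hvl t ht⟩

end Uniq

lemma hasDerivAt_fst {f : ℝ → ℝ × ℝ} {p : ℝ × ℝ} {t : ℝ} (h : HasDerivAt f p t) :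
    HasDerivAt (fun s => (f s).1) p.1 t := by
  have h2 := ((ContinuousLinearMap.fst ℝ ℝ ℝ).hasFDerivAt (x := f t)).comp t h.hasFDerivAt
  simpa [Function.comp_def] using h2.hasDerivAt

lemma hasDerivAt_snd {f : ℝ → ℝ × ℝ} {p : ℝ × ℝ} {t : ℝ} (h : HasDerivAt f p t) :
    HasDerivAt (fun s => (f s).2) p.2 t := by
  have h2 := ((ContinuousLinearMap.snd ℝ ℝ ℝ).hasFDerivAt (x := f t)).comp t h.hasFDerivAt
  simpa [Function.comp_def] using h2.hasDerivAt

/-- **Existence and uniqueness for small times for the velocity projected IDM.**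
On a sufficiently small time horizon `T* > 0` the velocity projected IDM admits
a unique solution `(x, v) ∈ W^{1,∞}((0,T*))²`. -/
theorem vpidm_wellposed_small_time
    (T a b vfree s₀ l δ τ : ℝ) (ulead : ℝ → ℝ) (x₀ xl₀ v₀ vl₀ : ℝ)
    (hT : 0 < T) (ha : 0 < a) (hb : 0 < b) (hvf : 0 < vfree)
    (hs₀ : 0 < s₀) (hl : 0 < l) (hτ : τ ∈ Ioo 0 T) (hδ : 1 < δ)
    (hinit : x₀ < xl₀ - l) (hv₀ : 0 ≤ v₀) (hvl₀ : 0 ≤ vl₀)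
    (hu : MemLp ulead ⊤ (volume.restrict (Ioo 0 T)))
    (hu' : ∀ t ∈ Icc (0:ℝ) T, 0 ≤ vl₀ + ∫ s in (0:ℝ)..t, ulead s) :
    ∃ Tstar ∈ Ioc (0:ℝ) T, ∃ x xl v vl : ℝ → ℝ,
      VPIDMSolution a b vfree τ s₀ l δ Tstar ulead x₀ xl₀ v₀ vl₀ x xl v vl ∧
      (∃ K : NNReal, LipschitzOnWith K x (Icc 0 Tstar) ∧
        LipschitzOnWith K v (Icc 0 Tstar)) ∧
      (∀ x' xl' v' vl' : ℝ → ℝ,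
        VPIDMSolution a b vfree τ s₀ l δ Tstar ulead x₀ xl₀ v₀ vl₀ x' xl' v' vl' →
        ∀ t ∈ Icc (0:ℝ) Tstar,
          x' t = x t ∧ xl' t = xl t ∧ v' t = v t ∧ vl' t = vl t) := by
  have hτ0 : 0 < τ := hτ.1
  have hτT : τ < T := hτ.2
  set c := 2 * Real.sqrt (a * b) with hcdef
  have hc : 0 < c := by rw [hcdef]; positivity
  -- bound on the leader control
  set Mu := (eLpNormEssSup ulead (volume.restrict (Ioo 0 T))).toReal with hMudef
  have hMu0 : 0 ≤ Mu := ENNReal.toReal_nonneg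
  have hSlt : eLpNormEssSup ulead (volume.restrict (Ioo 0 T)) < ⊤ := by
    have h := hu.2
    rwa [eLpNorm_exponent_top] at h
  have haeb : ∀ᵐ s ∂(volume.restrict (Ioo 0 T)), ‖ulead s‖ ≤ Mu := by
    filter_upwards [ae_le_eLpNormEssSup (f := ulead) (μ := volume.restrict (Ioo 0 T))] with s hs
    have h2 := ENNReal.toReal_mono hSlt.ne hs
    simpa [hMudef] using h2
  set uI := (Ioo (0:ℝ) T).indicator ulead with huIdef
  have huIb : ∀ᵐ s ∂(volume : Measure ℝ), ‖uI s‖ ≤ Mu := by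
    have h3 := (ae_restrict_iff' measurableSet_Ioo).1 haeb
    filter_upwards [h3] with s hs
    rw [huIdef]
    by_cases hmem : s ∈ Ioo (0:ℝ) T
    · rw [indicator_of_mem hmem]; exact hs hmem
    · rw [indicator_of_notMem hmem]; simpa using hMu0
  have huIm : AEStronglyMeasurable uI volume :=
    (aestronglyMeasurable_indicator_iff measurableSet_Ioo).2 hu.1
  have huIint : ∀ a' b' : ℝ, IntervalIntegrable uI volume a' b' := by
    intro a' b'
    rw [intervalIntegrable_iff]
    exact Integrable.mono' (integrableOn_const measure_Ioc_lt_top.ne) huIm.restrict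
      (ae_restrict_of_ae huIb)
  -- the leader's velocity
  set vl : ℝ → ℝ := fun t => vl₀ + ∫ s in (0:ℝ)..t, uI s with hvldef
  have hvlc : Continuous vl :=
    continuous_const.add (intervalIntegral.continuous_primitive huIint 0)
  have hvl0 : vl 0 = vl₀ := by simp [hvldef]
  set Avl := |vl₀| + Mu with hAvldef
  have hAvl0 : 0 ≤ Avl := by rw [hAvldef]; positivity
  have hvlb : ∀ t : ℝ, |t| ≤ 1 → |vl t| ≤ Avl := by
    intro t ht
    have h5' := intervalIntegral.norm_integral_le_of_norm_le_const_ae (a := 0) (b := t) (C := Mu)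
      (f := uI) (huIb.mono fun s hs _ => hs)
    have h5 : |∫ s in (0:ℝ)..t, uI s| ≤ |t * Mu| := by
      rw [Real.norm_eq_abs, sub_zero] at h5'
      rw [abs_mul, abs_of_nonneg hMu0, mul_comm]; exact h5'
    have h6 : |∫ s in (0:ℝ)..t, uI s| ≤ Mu := by
      calc |∫ s in (0:ℝ)..t, uI s| ≤ |t * Mu| := h5
        _ = |t| * Mu := by rw [abs_mul, abs_of_nonneg hMu0]
        _ ≤ 1 * Mu := mul_le_mul_of_nonneg_right ht hMu0
        _ = Mu := one_mul Mu
    calc |vl t| ≤ |vl₀| + |∫ s in (0:ℝ)..t, uI s| := abs_add_le _ _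
      _ ≤ |vl₀| + Mu := by linarith
  have hvlE : ∀ t : ℝ, 0 ≤ t → t < T → vl t = vl₀ + ∫ s in (0:ℝ)..t, ulead s := by
    intro t h0 hT'
    have h7 : (∫ s in (0:ℝ)..t, uI s) = ∫ s in (0:ℝ)..t, ulead s := by
      rw [intervalIntegral.integral_of_le h0, intervalIntegral.integral_of_le h0]
      apply setIntegral_congr_fun measurableSet_Ioc
      intro s hs
      rw [huIdef]
      exact indicator_of_mem (show s ∈ Ioo (0:ℝ) T from ⟨hs.1, lt_of_le_of_lt hs.2 hT'⟩) ulead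
    rw [hvldef]
    simp only
    rw [h7]
  -- the leader's position
  set xl : ℝ → ℝ := fun t => xl₀ + ∫ s in (0:ℝ)..t, vl s with hxldef
  have hxl0 : xl 0 = xl₀ := by simp [hxldef]
  have hxld : ∀ t, HasDerivAt xl (vl t) t := by
    intro t
    have h6 : HasDerivAt (fun u => ∫ s in (0:ℝ)..u, vl s) (vl t) t :=
      intervalIntegral.integral_hasDerivAt_right (hvlc.intervalIntegrable _ _)
        (hvlc.stronglyMeasurableAtFilter _ _) hvlc.continuousAt
    exact h6.const_add xl₀
  have hxlb : ∀ t : ℝ, |t| ≤ 1 → |xl t - xl₀| ≤ Avl * |t| := by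
    intro t ht
    have h7 : ∀ s ∈ Set.uIoc (0:ℝ) t, ‖vl s‖ ≤ Avl := by
      intro s hs
      apply hvlb
      rcases Set.mem_uIoc.1 hs with h | h
      · rw [abs_of_pos h.1]
        exact le_trans h.2 (le_trans (le_abs_self t) ht)
      · rw [abs_of_nonpos h.2]
        have : -t ≤ |t| := neg_le_abs t
        linarith [h.1]
    have h8 := intervalIntegral.norm_integral_le_of_norm_le_const h7
    have h9 : xl t - xl₀ = ∫ s in (0:ℝ)..t, vl s := by rw [hxldef]; ring
    rw [h9]
    simpa using h8
  -- geometry of the initial condition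
  set M := |v₀| + 1 with hMdef
  have hM0 : 0 ≤ M := by rw [hMdef]; positivity
  set g₀ := xl₀ - x₀ - l with hg₀def
  have hg₀ : 0 < g₀ := by rw [hg₀def]; linarith
  set ε := g₀ / 2 with hεdef
  have hε0 : 0 < ε := by rw [hεdef]; linarith
  set R := min 1 (g₀ / 4) with hRdef
  have hR0 : 0 < R := lt_min one_pos (by linarith)
  have hR1 : R ≤ 1 := min_le_left _ _
  have hR4 : R ≤ g₀ / 4 := min_le_right _ _
  set t₁ := min 1 (g₀ / (4 * (Avl + 1))) with ht₁def
  have ht₁0 : 0 < t₁ := lt_min one_pos (by positivity)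
  have ht₁1 : t₁ ≤ 1 := min_le_left _ _
  have hxlnear : ∀ t : ℝ, |t| ≤ t₁ → |xl t - xl₀| ≤ g₀ / 4 := by
    intro t ht
    calc |xl t - xl₀| ≤ Avl * |t| := hxlb t (le_trans ht ht₁1)
      _ ≤ Avl * (g₀ / (4 * (Avl + 1))) := by
          apply mul_le_mul_of_nonneg_left (le_trans ht (min_le_right _ _)) hAvl0
      _ ≤ g₀ / 4 := by
          rw [mul_div_assoc', div_le_div_iff₀ (by positivity) (by norm_num)]
          nlinarith
  have hballmem : ∀ p : ℝ × ℝ, p ∈ Metric.closedBall ((x₀, v₀) : ℝ × ℝ) R →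
      |p.1 - x₀| ≤ R ∧ |p.2 - v₀| ≤ R := by
    intro p hp
    rw [Metric.mem_closedBall, Prod.dist_eq, max_le_iff, Real.dist_eq, Real.dist_eq] at hp
    exact hp
  have hsub : ∀ t : ℝ, |t| ≤ t₁ → Metric.closedBall ((x₀, v₀) : ℝ × ℝ) R ⊆
      Iic (xl t - l - ε) ×ˢ Icc (-M) M := by
    intro t ht p hp
    obtain ⟨h1, h2⟩ := hballmem p hp
    obtain ⟨h1a, h1b⟩ := abs_le.1 h1
    obtain ⟨h2a, h2b⟩ := abs_le.1 h2
    obtain ⟨h3a, h3b⟩ := abs_le.1 (hxlnear t ht)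
    have hv0' : -|v₀| ≤ v₀ := neg_abs_le v₀
    have hv0'' : v₀ ≤ |v₀| := le_abs_self v₀
    refine Set.mem_prod.2 ⟨mem_Iic.2 ?_, mem_Icc.2 ⟨?_, ?_⟩⟩
    · rw [hεdef]
      have hgeq : g₀ = xl₀ - x₀ - l := hg₀def
      linarith
    · rw [hMdef]; linarith
    · rw [hMdef]; linarith
  -- the Picard-Lindelöf data
  obtain ⟨K, hK⟩ := field_lipschitz (l := l) ha hb hvf hτ0 hs₀ hδ hε0 hM0 hAvl0
  set CB := max M (a * (1 + (M / vfree) ^ δ +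
    ((2 * Real.sqrt (a * b) * (s₀ + M * τ) + M * (M + Avl)) /
      (2 * Real.sqrt (a * b) * ε)) ^ 2)) + 1 with hCBdef
  have hCB0 : 0 < CB := by
    have h10 : M ≤ max M (a * (1 + (M / vfree) ^ δ +
      ((2 * Real.sqrt (a * b) * (s₀ + M * τ) + M * (M + Avl)) /
        (2 * Real.sqrt (a * b) * ε)) ^ 2)) := le_max_left _ _
    rw [hCBdef]; linarith
  set F : ℝ → ℝ × ℝ → ℝ × ℝ := fun t p =>
    (max p.2 0, IDMAcc a b vfree τ s₀ l δ p.1 (max p.2 0) (xl t) (vl t)) with hFdef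
  set Tp := min t₁ (min (R / CB) (τ / 2)) with hTpdef
  have hTp0 : 0 < Tp := lt_min ht₁0 (lt_min (div_pos hR0 hCB0) (by linarith))
  have hTpt₁ : Tp ≤ t₁ := min_le_left _ _
  have hTpR : Tp ≤ R / CB := le_trans (min_le_right _ _) (min_le_left _ _)
  have hTpτ : Tp ≤ τ / 2 := le_trans (min_le_right _ _) (min_le_right _ _)
  have habs : ∀ t ∈ Icc (-Tp) Tp, |t| ≤ t₁ := fun t ht =>
    abs_le.2 ⟨by linarith [ht.1], le_trans ht.2 hTpt₁⟩
  have hvlA : ∀ t ∈ Icc (-Tp) Tp, |vl t| ≤ Avl := fun t ht =>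
    hvlb t (le_trans (habs t ht) ht₁1)
  have hFlip : ∀ t ∈ Icc (-Tp) Tp,
      LipschitzOnWith K (F t) (Metric.closedBall ((x₀, v₀) : ℝ × ℝ) R) := fun t ht =>
    (hK (xl t) (vl t) (hvlA t ht)).mono (hsub t (habs t ht))
  have hxlcont : Continuous xl := continuous_iff_continuousAt.2 fun t => (hxld t).continuousAt
  have hFnorm : ∀ t ∈ Icc (-Tp) Tp, ∀ p ∈ Metric.closedBall ((x₀, v₀) : ℝ × ℝ) R,
      ‖F t p‖ ≤ CB := by
    intro t ht p hp
    obtain ⟨hp1, hp2⟩ := hsub t (habs t ht) hp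
    simp only [mem_Iic] at hp1
    simp only [mem_Icc] at hp2
    have hw0 : (0:ℝ) ≤ max p.2 0 := le_max_right _ _
    have hwM : max p.2 0 ≤ M := max_le hp2.2 hM0
    have hacc := acc_bound (l := l) (X := xl t) (V := vl t) (x := p.1) (w := max p.2 0)
      ha hb hvf hτ0 hs₀ hδ hε0 hM0 hAvl0 (hvlA t ht) hp1 hw0 hwM
    have hMCB : M ≤ CB := by
      have := le_max_left M (a * (1 + (M / vfree) ^ δ +
        ((2 * Real.sqrt (a * b) * (s₀ + M * τ) + M * (M + Avl)) /
          (2 * Real.sqrt (a * b) * ε)) ^ 2))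
      rw [hCBdef]; linarith
    have hACB : a * (1 + (M / vfree) ^ δ +
        ((2 * Real.sqrt (a * b) * (s₀ + M * τ) + M * (M + Avl)) /
          (2 * Real.sqrt (a * b) * ε)) ^ 2) ≤ CB := by
      have := le_max_right M (a * (1 + (M / vfree) ^ δ +
        ((2 * Real.sqrt (a * b) * (s₀ + M * τ) + M * (M + Avl)) /
          (2 * Real.sqrt (a * b) * ε)) ^ 2))
      rw [hCBdef]; linarith
    show ‖(max p.2 0, IDMAcc a b vfree τ s₀ l δ p.1 (max p.2 0) (xl t) (vl t))‖ ≤ CB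
    rw [Prod.norm_def]
    apply max_le
    · show ‖max p.2 0‖ ≤ CB
      rw [Real.norm_eq_abs, abs_of_nonneg hw0]
      linarith
    · show ‖IDMAcc a b vfree τ s₀ l δ p.1 (max p.2 0) (xl t) (vl t)‖ ≤ CB
      rw [Real.norm_eq_abs]
      exact le_trans hacc hACB
  have hFcont : ∀ p ∈ Metric.closedBall ((x₀, v₀) : ℝ × ℝ) R,
      ContinuousOn (fun t : ℝ => F t p) (Icc (-Tp) Tp) := by
    intro p hp
    apply ContinuousOn.prodMk continuousOn_const
    show ContinuousOn
      (fun t => IDMAcc a b vfree τ s₀ l δ p.1 (max p.2 0) (xl t) (vl t)) (Icc (-Tp) Tp)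
    simp only [IDMAcc]
    apply ContinuousOn.mul continuousOn_const
    apply ContinuousOn.sub (continuousOn_const.sub continuousOn_const)
    apply ContinuousOn.pow
    apply ContinuousOn.div
    · exact continuousOn_const.add
        (continuousOn_const.mul (continuousOn_const.sub hvlc.continuousOn))
    · exact continuousOn_const.mul
        ((hxlcont.continuousOn.sub continuousOn_const).sub continuousOn_const)
    · intro t ht
      have h11 := (hsub t (habs t ht) hp).1
      simp only [mem_Iic] at h11
      have : (0:ℝ) < xl t - p.1 - l := by linarith
      positivity
  have hPL : IsPicardLindelof F (⟨0, ⟨by linarith, hTp0.le⟩⟩ : Icc (-Tp) Tp)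
      ((x₀, v₀) : ℝ × ℝ) (Real.toNNReal R) 0 (Real.toNNReal CB) K :=
    { lipschitzOnWith := by rw [Real.coe_toNNReal R hR0.le]; exact hFlip
      continuousOn := by rw [Real.coe_toNNReal R hR0.le]; exact hFcont
      norm_le := by
        rw [Real.coe_toNNReal R hR0.le, Real.coe_toNNReal CB hCB0.le]; exact hFnorm
      mul_max_le := by
        have key : CB * Tp ≤ R := by
          calc CB * Tp ≤ CB * (R / CB) := mul_le_mul_of_nonneg_left hTpR hCB0.le
            _ = R := mul_div_cancel₀ R (ne_of_gt hCB0)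
        simp only [Real.coe_toNNReal R hR0.le, Real.coe_toNNReal CB hCB0.le, NNReal.coe_zero,
          sub_zero, zero_sub, neg_neg, max_self]
        exact key }
  obtain ⟨fS, hfix⟩ := ODE.FunSpace.exists_isFixedPt_next hPL (Metric.mem_closedBall_self le_rfl)
  set F0 : ℝ → ℝ × ℝ := fS.compProj with hF0def
  have hF00 : F0 0 = ((x₀, v₀) : ℝ × ℝ) := by
    show fS.compProj ((⟨0, ⟨by linarith, hTp0.le⟩⟩ : Icc (-Tp) Tp) : ℝ) = _
    rw [ODE.FunSpace.compProj_val, ← hfix, ODE.FunSpace.next_apply₀]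
  have hmemBall : ∀ t : ℝ, F0 t ∈ Metric.closedBall ((x₀, v₀) : ℝ × ℝ) R := by
    intro t
    have h12 : F0 t ∈ Metric.closedBall ((x₀, v₀) : ℝ × ℝ) (Real.toNNReal R : ℝ) :=
      fS.compProj_mem_closedBall hPL.mul_max_le
    rwa [Real.coe_toNNReal R hR0.le] at h12
  have hF0deriv : ∀ t ∈ Icc (-Tp) Tp,
      HasDerivWithinAt F0 (F t (F0 t)) (Icc (-Tp) Tp) t := by
    intro t ht
    apply ODE.hasDerivWithinAt_picard_Icc (show (0:ℝ) ∈ Icc (-Tp) Tp from ⟨by linarith, hTp0.le⟩)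
      hPL.continuousOn_uncurry fS.continuous_compProj.continuousOn
      (fun _ _ ↦ fS.compProj_mem_closedBall hPL.mul_max_le) ((x₀, v₀) : ℝ × ℝ) ht
      |>.congr_of_mem _ ht
    intro t' ht'
    show fS.compProj t' = _
    nth_rw 1 [← hfix]
    rw [ODE.FunSpace.compProj_of_mem ht', ODE.FunSpace.next_apply]
  have hlipF0 : LipschitzWith (Real.toNNReal CB * 1) F0 :=
    fS.lipschitzWith.comp (LipschitzWith.projIcc _)
  -- the solution
  set Ts := Tp / 2 with hTsdef
  have hTs0 : 0 < Ts := by rw [hTsdef]; linarith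
  have hTsT : Ts < T := by rw [hTsdef]; linarith
  have hsubIcc : ∀ t ∈ Icc (0:ℝ) Ts, t ∈ Icc (-Tp) Tp := fun t ht =>
    ⟨by linarith [ht.1], by rw [hTsdef] at ht; linarith [ht.2]⟩
  have hsubIoo : ∀ t ∈ Icc (0:ℝ) Ts, t ∈ Ioo (-Tp) Tp := fun t ht =>
    ⟨by linarith [ht.1], by rw [hTsdef] at ht; linarith [ht.2]⟩
  set x : ℝ → ℝ := fun t => (F0 t).1 with hxdef
  set v : ℝ → ℝ := fun t => (F0 t).2 with hvdef
  have hDF0 : ∀ t ∈ Icc (0:ℝ) Ts, HasDerivAt F0 (F t (F0 t)) t := fun t ht =>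
    (hF0deriv t (hsubIcc t ht)).hasDerivAt
      (Icc_mem_nhds (hsubIoo t ht).1 (hsubIoo t ht).2)
  have hgapmem : ∀ t ∈ Icc (0:ℝ) Ts, x t ≤ xl t - l - ε := by
    intro t ht
    have h13 := (hsub t (habs t (hsubIcc t ht)) (hmemBall t)).1
    simpa using h13
  have hgap : ∀ t ∈ Icc (0:ℝ) Ts, 0 < xl t - x t - l := by
    intro t ht
    have := hgapmem t ht
    linarith
  have hSol : VPIDMSolution a b vfree τ s₀ l δ Ts ulead x₀ xl₀ v₀ vl₀ x xl v vl :=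
    { init_x := by rw [hxdef]; simp only; rw [hF00]
      init_xl := hxl0
      init_v := by rw [hvdef]; simp only; rw [hF00]
      init_vl := hvl0
      gap_pos := hgap
      deriv_x := fun t ht => hasDerivAt_fst (hDF0 t ht)
      deriv_xl := fun t _ => hxld t
      eq_vl := fun t ht => hvlE t ht.1 (lt_of_le_of_lt ht.2 hTsT)
      deriv_v := fun t ht => hasDerivAt_snd (hDF0 t ht) }
  refine ⟨Ts, ⟨hTs0, hTsT.le⟩, x, xl, v, vl, hSol, ?_, ?_⟩
  · exact ⟨1 * (Real.toNNReal CB * 1),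
      ((LipschitzWith.prod_fst (α := ℝ) (β := ℝ)).comp hlipF0).lipschitzOnWith,
      ((LipschitzWith.prod_snd (α := ℝ) (β := ℝ)).comp hlipF0).lipschitzOnWith⟩
  · intro x' xl' v' vl' S'
    exact vpidm_unique ha hb hvf hτ0 hs₀ hδ hTs0 hAvl0 hSol S'
      (fun t ht => hvlA t (hsubIcc t ht))
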